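/- arXiv:2501.00932 — 3 statements merged into one kernel-verified Lean document; each statement's English description precedes it below -/
import Mathlib

section
/- Let W, W̃ ∈ ℂ^n and W', W̃' ∈ ℂ^{n'}, and suppose d := min{|a - b| : a a coordinate of W⊔W', b a coordinate of W̃⊔W̃'} > 0. Then the Cauchy determinant of the concatenated vectors satisfies |det[1/((W⊔W')_i − (W̃⊔W̃')_j)]_{i,j=1}^{n+n'}| ≤ n^{n/2} · (n')^{n'/2} · 2^{(n+n')/2} · d^{-(n+n')}. -/
open Finset

lemma hadamard_det {N : ℕ} (M : Matrix (Fin N) (Fin N) ℂ) :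
    ‖M.det‖ ≤ ∏ i, Real.sqrt (∑ j, ‖M i j‖ ^ 2) := by
  haveI : WellFoundedLT (Fin N) := inferInstance
  have h : Module.finrank ℂ (EuclideanSpace ℂ (Fin N)) = Fintype.card (Fin N) := by
    simp [finrank_euclideanSpace]
  set f : Fin N → EuclideanSpace ℂ (Fin N) :=
    fun i => (WithLp.equiv 2 (Fin N → ℂ)).symm (M i) with hf
  set std := EuclideanSpace.basisFun (Fin N) ℂ with hstd
  have h1 : std.toBasis.det f = M.det := by
    rw [Module.Basis.det_apply, ← Matrix.det_transpose]
    congr 1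
  have h2 : std.toBasis.toMatrix f =
      std.toBasis.toMatrix (InnerProductSpace.gramSchmidtOrthonormalBasis h f).toBasis *
        (InnerProductSpace.gramSchmidtOrthonormalBasis h f).toBasis.toMatrix f :=
    (Module.Basis.toMatrix_mul_toMatrix std.toBasis _ f).symm
  have h3 : ‖M.det‖ = ‖((InnerProductSpace.gramSchmidtOrthonormalBasis h f).toBasis.det f : ℂ)‖ := by
    rw [← h1, Module.Basis.det_apply, Module.Basis.det_apply, h2, Matrix.det_mul, norm_mul]
    have : ‖(std.toBasis.toMatrix (InnerProductSpace.gramSchmidtOrthonormalBasis h f).toBasis).det‖ = 1 := by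
      rw [← Module.Basis.det_apply]
      exact std.det_to_matrix_orthonormalBasis _
    rw [this, one_mul]
  rw [h3, InnerProductSpace.gramSchmidtOrthonormalBasis_det h f, norm_prod]
  apply Finset.prod_le_prod (fun i _ => norm_nonneg _)
  intro i _
  calc ‖(inner ℂ (InnerProductSpace.gramSchmidtOrthonormalBasis h f i) (f i) : ℂ)‖
      ≤ ‖InnerProductSpace.gramSchmidtOrthonormalBasis h f i‖ * ‖f i‖ := norm_inner_le_norm _ _
    _ ≤ Real.sqrt (∑ j, ‖M i j‖ ^ 2) := by
        rw [(InnerProductSpace.gramSchmidtOrthonormalBasis h f).orthonormal.1 i, one_mul,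
          EuclideanSpace.norm_eq]
        apply le_of_eq
        congr 1

lemma conv_ineq (x y : ℝ) (hx : 0 ≤ x) (hy : 0 ≤ y) :
    (x + y) ^ ((x + y) / 2) ≤ x ^ (x / 2) * y ^ (y / 2) * 2 ^ ((x + y) / 2) := by
  rcases eq_or_lt_of_le hx with rfl | hx
  · simp only [zero_add, Real.rpow_zero, zero_div, one_mul]
    calc y ^ (y / 2) = y ^ (y / 2) * 1 := (mul_one _).symm
      _ ≤ y ^ (y / 2) * 2 ^ (y / 2) :=
          mul_le_mul_of_nonneg_left (Real.one_le_rpow (by norm_num) (by positivity))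
            (Real.rpow_nonneg hy _)
  rcases eq_or_lt_of_le hy with rfl | hy
  · simp only [add_zero, Real.rpow_zero, zero_div, mul_one]
    calc x ^ (x / 2) = x ^ (x / 2) * 1 := (mul_one _).symm
      _ ≤ x ^ (x / 2) * 2 ^ (x / 2) :=
          mul_le_mul_of_nonneg_left (Real.one_le_rpow (by norm_num) (by positivity))
            (Real.rpow_nonneg hx.le _)
  have hxy : (0:ℝ) < x + y := by linarith
  rw [Real.rpow_def_of_pos hxy, Real.rpow_def_of_pos hx, Real.rpow_def_of_pos hy,
    Real.rpow_def_of_pos (by norm_num : (0:ℝ) < 2), ← Real.exp_add, ← Real.exp_add,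
    Real.exp_le_exp]
  have hlog : Real.log (x + y) = Real.log ((x + y) / 2) + Real.log 2 := by
    rw [← Real.log_mul (by positivity) (by norm_num : (2:ℝ) ≠ 0),
      div_mul_cancel₀ _ (by norm_num : (2:ℝ) ≠ 0)]
  have key := Real.convexOn_mul_log.2 (Set.mem_Ici.mpr hx.le) (Set.mem_Ici.mpr hy.le)
    (by norm_num : (0:ℝ) ≤ 1/2) (by norm_num : (0:ℝ) ≤ 1/2) (by norm_num)
  simp only [smul_eq_mul] at key
  have e1 : (1:ℝ)/2 * x + 1/2 * y = (x + y) / 2 := by ring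
  rw [e1] at key
  rw [hlog]
  nlinarith [key]

theorem stmt_4 (n n' : ℕ) (W Wt : Fin n → ℂ) (W' Wt' : Fin n' → ℂ) (d : ℝ) (hd : 0 < d)
    (hdist : ∀ i j : Fin (n + n'),
      d ≤ ‖Fin.append W W' i - Fin.append Wt Wt' j‖) :
    ‖(Matrix.det (fun i j : Fin (n + n') =>
          1 / (Fin.append W W' i - Fin.append Wt Wt' j)))‖ ≤
      (n : ℝ) ^ ((n : ℝ) / 2) * (n' : ℝ) ^ ((n' : ℝ) / 2) *
        2 ^ (((n : ℝ) + n') / 2) * d ^ (-((n : ℝ) + n')) := by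
  set N := n + n' with hN
  set M : Matrix (Fin N) (Fin N) ℂ :=
    fun i j => 1 / (Fin.append W W' i - Fin.append Wt Wt' j) with hM
  have hentry : ∀ i j, ‖M i j‖ ≤ 1 / d := by
    intro i j
    rw [hM]
    simp only [norm_div, norm_one]
    apply div_le_div_of_nonneg_left zero_le_one hd
    · exact hdist i j
  have step1 : ‖M.det‖ ≤ ∏ i : Fin N, Real.sqrt (∑ j, ‖M i j‖ ^ 2) := hadamard_det M
  have step2 : ∀ i : Fin N, Real.sqrt (∑ j, ‖M i j‖ ^ 2) ≤ Real.sqrt N * (1 / d) := by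
    intro i
    have : ∑ j, ‖M i j‖ ^ 2 ≤ (N : ℝ) * (1 / d) ^ 2 := by
      calc ∑ j, ‖M i j‖ ^ 2 ≤ ∑ _j : Fin N, (1 / d) ^ 2 := by
            apply Finset.sum_le_sum
            intro j _
            have := hentry i j
            nlinarith [norm_nonneg (M i j)]
        _ = (N : ℝ) * (1 / d) ^ 2 := by simp [Finset.sum_const, Finset.card_univ]
    calc Real.sqrt (∑ j, ‖M i j‖ ^ 2) ≤ Real.sqrt ((N : ℝ) * (1 / d) ^ 2) :=
          Real.sqrt_le_sqrt this
      _ = Real.sqrt N * (1 / d) := by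
          rw [Real.sqrt_mul (Nat.cast_nonneg N), Real.sqrt_sq (by positivity)]
  have step3 : ‖M.det‖ ≤ (Real.sqrt N * (1 / d)) ^ N := by
    calc ‖M.det‖ ≤ ∏ i : Fin N, Real.sqrt (∑ j, ‖M i j‖ ^ 2) := step1
      _ ≤ ∏ _i : Fin N, (Real.sqrt N * (1 / d)) := by
          apply Finset.prod_le_prod
          · intro i _; positivity
          · intro i _; exact step2 i
      _ = (Real.sqrt N * (1 / d)) ^ N := by
          simp [Finset.prod_const, Finset.card_univ]
  have hpow : (Real.sqrt N * (1 / d)) ^ N = (N : ℝ) ^ ((N : ℝ) / 2) * d ^ (-(N : ℝ)) := by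
    have e1 : ((1:ℝ)/d) ^ (N:ℕ) = d ^ (-(N:ℝ)) := by
      rw [← Real.rpow_natCast (1/d), one_div, Real.inv_rpow hd.le, ← Real.rpow_neg hd.le]
    have e2 : Real.sqrt (N:ℝ) ^ (N:ℕ) = (N:ℝ) ^ ((N:ℝ)/2) := by
      rw [← Real.rpow_natCast (Real.sqrt N), Real.sqrt_eq_rpow,
        ← Real.rpow_mul (Nat.cast_nonneg N)]
      congr 1
      ring
    rw [mul_pow, e1, e2]
  have harith : (N : ℝ) ^ ((N : ℝ) / 2) ≤
      (n : ℝ) ^ ((n : ℝ) / 2) * (n' : ℝ) ^ ((n' : ℝ) / 2) * 2 ^ (((n : ℝ) + n') / 2) := by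
    have := conv_ineq (n : ℝ) (n' : ℝ) (Nat.cast_nonneg n) (Nat.cast_nonneg n')
    have hcast : ((N : ℕ) : ℝ) = (n : ℝ) + n' := by push_cast [hN]; ring
    rw [hcast]
    exact this
  have hNcast : -((n : ℝ) + n') = -(N : ℝ) := by push_cast [hN]; ring
  calc ‖M.det‖ ≤ (Real.sqrt N * (1 / d)) ^ N := step3
    _ = (N : ℝ) ^ ((N : ℝ) / 2) * d ^ (-(N : ℝ)) := hpow
    _ ≤ (n : ℝ) ^ ((n : ℝ) / 2) * (n' : ℝ) ^ ((n' : ℝ) / 2) *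
          2 ^ (((n : ℝ) + n') / 2) * d ^ (-((n : ℝ) + n')) := by
        rw [hNcast]
        have := Real.rpow_nonneg hd.le (-(N:ℝ))
        exact mul_le_mul_of_nonneg_right harith this
end

section
/- Let X be an exponential random variable with rate 2 and Z a standard Gaussian random variable independent of X. Then for every α > 0 and every β ∈ ℝ, P(X + √(2α)·Z − 2α ≥ β) = e^{−2β} · P(X + √(2α)·Z − 2α ≥ −β). -/
open MeasureTheory ProbabilityTheory Real Set

/-- Tail of the exponential distribution with rate 2. -/
lemma expMeasure_two_Ici (a : ℝ) :
    expMeasure 2 (Ici a) = ENNReal.ofReal (min 1 (Real.exp (-(2 * a)))) := by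
  have hpdf : expMeasure 2 (Ici a) = ∫⁻ x in Ici a, exponentialPDF 2 x := by
    rw [expMeasure, gammaMeasure, withDensity_apply _ measurableSet_Ici]
    rfl
  rcases le_or_gt a 0 with ha | ha
  · have hmin : min 1 (Real.exp (-(2 * a))) = 1 := by
      have : (1 : ℝ) ≤ Real.exp (-(2 * a)) := by
        rw [Real.one_le_exp_iff]; linarith
      exact min_eq_left this
    rw [hmin]
    have htot : (∫⁻ x, exponentialPDF 2 x) = 1 :=
      lintegral_exponentialPDF_eq_one (by norm_num)
    have hsplit := lintegral_add_compl (μ := volume) (exponentialPDF 2) (measurableSet_Iio (a := a))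
    rw [compl_Iio] at hsplit
    rw [hpdf]
    have h0 : (∫⁻ x in Iio a, exponentialPDF 2 x) = 0 :=
      lintegral_exponentialPDF_of_nonpos ha
    rw [h0, zero_add, htot] at hsplit
    simp [hsplit]
  · have hmin : min 1 (Real.exp (-(2 * a))) = Real.exp (-(2 * a)) := by
      refine min_eq_right ?_
      rw [Real.exp_le_one_iff]; linarith
    rw [hmin, hpdf]
    have hcongr : (∫⁻ x in Ici a, exponentialPDF 2 x)
        = ∫⁻ x in Ici a, ENNReal.ofReal (2 * Real.exp (-(2 * x))) := by
      refine setLIntegral_congr_fun measurableSet_Ici ?_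
      intro x hx
      rw [exponentialPDF_of_nonneg (le_trans ha.le hx)]
    rw [hcongr]
    have hInt : IntegrableOn (fun x => 2 * Real.exp (-(2 * x))) (Ici a) := by
      have := (exp_neg_integrableOn_Ioi a (show (0:ℝ) < 2 by norm_num)).const_mul 2
      rw [integrableOn_Ici_iff_integrableOn_Ioi]
      simpa [neg_mul, IntegrableOn] using this
    rw [← ofReal_integral_eq_lintegral_ofReal hInt
        (ae_of_all _ fun x => by positivity)]
    congr 1
    rw [integral_Ici_eq_integral_Ioi]
    have h1 : ∫ x in Ioi a, 2 * Real.exp (-(2 * x))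
        = 2 * ∫ x in Ioi a, Real.exp (-(2 * x)) := by
      rw [integral_const_mul]
    have h2 : ∫ x in Ioi a, Real.exp (-(2 * x))
        = 2⁻¹ * Real.exp (-(2 * a)) := by
      have := integral_comp_mul_left_Ioi (fun y => Real.exp (-y)) a
        (show (0:ℝ) < 2 by norm_num)
      simp only [smul_eq_mul] at this
      rw [show (fun x => Real.exp (-(2 * x))) = fun x => Real.exp (-(2 * x)) from rfl]
      calc ∫ x in Ioi a, Real.exp (-(2 * x))
          = 2⁻¹ * ∫ y in Ioi (2 * a), Real.exp (-y) := this
        _ = 2⁻¹ * Real.exp (-(2 * a)) := by rw [integral_exp_neg_Ioi]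
    rw [h1, h2]
    ring

theorem stmt_9 {Ω : Type*} [MeasurableSpace Ω] (μ : Measure Ω) [IsProbabilityMeasure μ]
    (X Z : Ω → ℝ) (hX : Measurable X) (hZ : Measurable Z)
    (hXlaw : μ.map X = expMeasure 2)
    (hZlaw : μ.map Z = gaussianReal 0 1)
    (hindep : IndepFun X Z μ)
    (α β : ℝ) (hα : 0 < α) :
    (μ {ω | β ≤ X ω + Real.sqrt (2 * α) * Z ω - 2 * α}).toReal =
      Real.exp (-2 * β) *
        (μ {ω | -β ≤ X ω + Real.sqrt (2 * α) * Z ω - 2 * α}).toReal := by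
  set c : ℝ := Real.sqrt (2 * α) with hc_def
  have hc : 0 < c := Real.sqrt_pos.mpr (by linarith)
  have hc2 : c ^ 2 = 2 * α := Real.sq_sqrt (by linarith)
  haveI : IsProbabilityMeasure (expMeasure 2) :=
    isProbabilityMeasure_expMeasure (by norm_num)
  -- joint law
  have hmap : μ.map (fun ω => (X ω, Z ω)) = (expMeasure 2).prod (gaussianReal 0 1) := by
    rw [← hXlaw, ← hZlaw]
    exact (indepFun_iff_map_prod_eq_prod_map_map hX.aemeasurable hZ.aemeasurable).mp hindep
  -- the tail probability as a Gaussian integral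
  have key : ∀ t : ℝ, μ {ω | t ≤ X ω + c * Z ω}
      = ∫⁻ z, ENNReal.ofReal (min 1 (Real.exp (-(2 * (t - c * z))))) ∂(gaussianReal 0 1) := by
    intro t
    have hTmeas : MeasurableSet {p : ℝ × ℝ | t ≤ p.1 + c * p.2} :=
      measurableSet_le measurable_const (measurable_fst.add (measurable_snd.const_mul c))
    have hset : {ω | t ≤ X ω + c * Z ω}
        = (fun ω => (X ω, Z ω)) ⁻¹' {p : ℝ × ℝ | t ≤ p.1 + c * p.2} := rfl
    rw [hset, ← Measure.map_apply (hX.prodMk hZ) hTmeas, hmap,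
      Measure.prod_apply_symm hTmeas]
    refine lintegral_congr fun z => ?_
    have hpre : (fun x => (x, z)) ⁻¹' {p : ℝ × ℝ | t ≤ p.1 + c * p.2} = Ici (t - c * z) := by
      ext x
      simp only [mem_preimage, mem_setOf_eq, mem_Ici, sub_le_iff_le_add]
    rw [hpre, expMeasure_two_Ici]
  have hset1 : {ω | β ≤ X ω + c * Z ω - 2 * α} = {ω | (2 * α + β) ≤ X ω + c * Z ω} := by
    ext ω; simp only [mem_setOf_eq]; constructor <;> intro h <;> linarith
  have hset2 : {ω | -β ≤ X ω + c * Z ω - 2 * α} = {ω | (2 * α - β) ≤ X ω + c * Z ω} := by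
    ext ω; simp only [mem_setOf_eq]; constructor <;> intro h <;> linarith
  -- Gaussian density form
  have hγ : gaussianReal 0 1 = volume.withDensity (gaussianPDF 0 1) :=
    gaussianReal_of_var_ne_zero 0 one_ne_zero
  have hIform : ∀ t : ℝ,
      (∫⁻ z, ENNReal.ofReal (min 1 (Real.exp (-(2 * (t - c * z))))) ∂(gaussianReal 0 1))
      = ∫⁻ z, gaussianPDF 0 1 z * ENNReal.ofReal (min 1 (Real.exp (-(2 * (t - c * z)))))
          ∂(volume : Measure ℝ) := by
    intro t
    rw [hγ]
    refine lintegral_withDensity_eq_lintegral_mul _ (measurable_gaussianPDF 0 1) ?_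
    apply Measurable.ennreal_ofReal
    exact (measurable_const.min ((measurable_const.sub
      (measurable_id.const_mul c)).const_mul 2).neg.exp)
  -- change of variables z ↦ 2c - z and pointwise identity
  have main : μ {ω | (2 * α + β) ≤ X ω + c * Z ω}
      = ENNReal.ofReal (Real.exp (-2 * β)) * μ {ω | (2 * α - β) ≤ X ω + c * Z ω} := by
    rw [key, key, hIform, hIform]
    have hmeas2 : Measurable (fun z : ℝ =>
        gaussianPDF 0 1 z * ENNReal.ofReal (min 1 (Real.exp (-(2 * ((2*α - β) - c * z)))))) := by
      refine (measurable_gaussianPDF 0 1).mul ?_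
      exact (measurable_const.min ((measurable_const.sub
        (measurable_id.const_mul c)).const_mul 2).neg.exp).ennreal_ofReal
    have hcv := (Measure.measurePreserving_sub_left (volume : Measure ℝ) (2 * c)).lintegral_comp hmeas2
    have hmeas3 : Measurable (fun z : ℝ =>
        gaussianPDF 0 1 (2 * c - z) *
          ENNReal.ofReal (min 1 (Real.exp (-(2 * ((2*α - β) - c * (2 * c - z))))))) :=
      hmeas2.comp (measurable_const.sub measurable_id)
    rw [← hcv, ← lintegral_const_mul _ hmeas3]
    refine lintegral_congr fun z => ?_
    show gaussianPDF 0 1 z * ENNReal.ofReal (min 1 (Real.exp (-(2 * ((2*α + β) - c * z)))))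
      = ENNReal.ofReal (Real.exp (-2 * β)) *
        (gaussianPDF 0 1 (2 * c - z) *
          ENNReal.ofReal (min 1 (Real.exp (-(2 * ((2*α - β) - c * (2 * c - z)))))))
    have hφ : ∀ x : ℝ, gaussianPDF 0 1 x
        = ENNReal.ofReal ((Real.sqrt (2 * Real.pi))⁻¹ * Real.exp (-(x ^ 2) / 2)) := by
      intro x
      simp [gaussianPDF, gaussianPDFReal, NNReal.coe_one]
    rw [hφ, hφ]
    rw [← ENNReal.ofReal_mul (by positivity), ← ENNReal.ofReal_mul (by positivity),
      ← ENNReal.ofReal_mul (Real.exp_nonneg _)]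
    congr 1
    -- now a real identity
    set s : ℝ := (2 * α + β) - c * z with hs_def
    have e1 : (2*α - β) - c * (2 * c - z) = -s := by
      have : c * c = 2 * α := by nlinarith [hc2]
      simp only [hs_def]; nlinarith [this]
    have e2 : -((2 * c - z) ^ 2) / 2 = -(z ^ 2) / 2 + (2 * β - 2 * s) := by
      have hcz : c * z = 2 * α + β - s := by rw [hs_def]; ring
      have : c * c = 2 * α := by nlinarith [hc2]
      nlinarith [this, hcz]
    rw [e1, e2, Real.exp_add]
    have hmin : min 1 (Real.exp (-(2 * s)))
        = Real.exp (-(2 * s)) * min 1 (Real.exp (-(2 * -s))) := by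
      rcases le_or_gt s 0 with hs | hs
      · have h1 : (1:ℝ) ≤ Real.exp (-(2 * s)) := by rw [Real.one_le_exp_iff]; linarith
        have h2 : Real.exp (-(2 * -s)) ≤ 1 := by rw [Real.exp_le_one_iff]; linarith
        rw [min_eq_left h1, min_eq_right h2, ← Real.exp_add]
        norm_num
      · have h1 : Real.exp (-(2 * s)) ≤ 1 := by rw [Real.exp_le_one_iff]; linarith
        have h2 : (1:ℝ) ≤ Real.exp (-(2 * -s)) := by rw [Real.one_le_exp_iff]; linarith
        rw [min_eq_right h1, min_eq_left h2, mul_one]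
    rw [hmin]
    have hexp : Real.exp (-2 * β) * Real.exp (2 * β - 2 * s) = Real.exp (-(2 * s)) := by
      rw [← Real.exp_add]; ring_nf
    calc (Real.sqrt (2 * Real.pi))⁻¹ * Real.exp (-(z ^ 2) / 2) *
          (Real.exp (-(2 * s)) * min 1 (Real.exp (-(2 * -s))))
        = Real.exp (-2 * β) *
          ((Real.sqrt (2 * Real.pi))⁻¹ *
            (Real.exp (-(z ^ 2) / 2) * (Real.exp (-2 * β) * Real.exp (2 * β - 2 * s))
              / Real.exp (-2 * β)) *
            min 1 (Real.exp (-(2 * -s)))) := by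
          rw [hexp]
          field_simp
      _ = Real.exp (-2 * β) *
          ((Real.sqrt (2 * Real.pi))⁻¹ *
            (Real.exp (-(z ^ 2) / 2) * Real.exp (2 * β - 2 * s)) *
            min 1 (Real.exp (-(2 * -s)))) := by
          congr 2
          field_simp
  -- conclude
  have h1 := main
  rw [← hset1, ← hset2] at h1
  have hfin : μ {ω | -β ≤ X ω + c * Z ω - 2 * α} ≠ ⊤ := measure_ne_top _ _
  calc (μ {ω | β ≤ X ω + c * Z ω - 2 * α}).toReal
      = (ENNReal.ofReal (Real.exp (-2 * β)) * μ {ω | -β ≤ X ω + c * Z ω - 2 * α}).toReal := by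
        rw [h1]
    _ = Real.exp (-2 * β) * (μ {ω | -β ≤ X ω + c * Z ω - 2 * α}).toReal := by
        rw [ENNReal.toReal_mul, ENNReal.toReal_ofReal (Real.exp_nonneg _)]
end

section
/- Fix α, β, τ ∈ ℝ and a complex number u on the contour {r e^{±2πi/3} : r ≥ 0}. With F_L as above, e^{(2/3)L^{3/2}} F_L(−√L + L^{−1/4} u) → exp(u² + α − β + τ/3) as L → +∞. -/
open Complex Real Filter

/-- The function `F_L(ζ) = exp(−(1/3)(1 + τ L^{−3/2}) ζ³ + (α L^{−1}) ζ² + (L + β L^{−1/2}) ζ)`. -/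
noncomputable def FL (τ α β L : ℝ) (ζ : ℂ) : ℂ :=
  Complex.exp (-(1 / 3 : ℂ) * ((1 : ℝ) + τ * L ^ (-(3 : ℝ) / 2) : ℝ) * ζ ^ 3
    + ((α * L⁻¹ : ℝ) : ℂ) * ζ ^ 2 + ((L + β * L ^ (-(1 : ℝ) / 2) : ℝ) : ℂ) * ζ)

lemma rpow_quarter (L : ℝ) (hL : 0 < L) (n : ℕ) :
    L ^ ((n : ℝ)/4) = (L ^ ((1:ℝ)/4)) ^ n := by
  rw [← Real.rpow_natCast (L ^ ((1:ℝ)/4)) n, ← Real.rpow_mul hL.le]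
  ring_nf

theorem stmt_16 (α β τ : ℝ) (u : ℂ)
    (hu : ∃ r : ℝ, 0 ≤ r ∧
      (u = (r : ℂ) * Complex.exp (2 * Real.pi * Complex.I / 3) ∨
       u = (r : ℂ) * Complex.exp (-(2 * Real.pi * Complex.I) / 3))) :
    Tendsto (fun L : ℝ =>
        Complex.exp ((2 / 3 : ℂ) * ((L ^ ((3 : ℝ) / 2) : ℝ) : ℂ)) *
          FL τ α β L ((-(Real.sqrt L : ℝ) : ℝ) + ((L ^ (-(1 : ℝ) / 4) : ℝ) : ℂ) * u))
      atTop (nhds (Complex.exp (u ^ 2 + (α : ℂ) - (β : ℂ) + (τ : ℂ) / 3))) := by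
  have h0 : Tendsto (fun L : ℝ => ((0:ℝ) : ℂ)) atTop (nhds ((0:ℝ):ℂ)) := tendsto_const_nhds
  have hr : ∀ c : ℝ, c < 0 → Tendsto (fun L : ℝ => ((L ^ c : ℝ) : ℂ)) atTop (nhds 0) := by
    intro c hc
    have := (Complex.continuous_ofReal.tendsto 0).comp (tendsto_rpow_neg_atTop (by linarith : 0 < -c))
    simpa [Function.comp] using this.congr (fun L => by rw [Function.comp, neg_neg])
  have h1 := hr (-(3:ℝ)/4) (by norm_num)
  have h2 := hr (-(3:ℝ)/2) (by norm_num)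
  have h3 := hr (-(9:ℝ)/4) (by norm_num)
  have key : Tendsto (fun L : ℝ => (u^2 + (α:ℂ) - β + (τ:ℂ)/3
      + ((L ^ (-(3:ℝ)/4) : ℝ) : ℂ) * (-(1/3)*u^3 + ((β:ℂ) - τ - 2*α)*u)
      + ((L ^ (-(3:ℝ)/2) : ℝ) : ℂ) * (((τ:ℂ)+α)*u^2)
      + ((L ^ (-(9:ℝ)/4) : ℝ) : ℂ) * (-((τ:ℂ)/3)*u^3))) atTop
      (nhds (u ^ 2 + (α : ℂ) - (β : ℂ) + (τ : ℂ) / 3)) := by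
    have h0' : Tendsto (fun _ : ℝ => (u^2 + (α:ℂ) - β + (τ:ℂ)/3)) atTop
        (nhds (u^2 + (α:ℂ) - β + (τ:ℂ)/3)) := tendsto_const_nhds
    have := ((h0'.add (h1.mul_const (-(1/3)*u^3 + ((β:ℂ) - τ - 2*α)*u))).add
      (h2.mul_const (((τ:ℂ)+α)*u^2))).add (h3.mul_const (-((τ:ℂ)/3)*u^3))
    simpa using this
  have := (Complex.continuous_exp.tendsto _).comp key
  refine this.congr' ?_
  filter_upwards [eventually_gt_atTop (0:ℝ)] with L hL
  set t : ℝ := L ^ ((1:ℝ)/4) with ht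
  have ht0 : 0 < t := Real.rpow_pos_of_pos hL _
  have hq : ∀ n : ℕ, L ^ ((n : ℝ)/4) = t ^ n := fun n => rpow_quarter L hL n
  have e6 : L ^ ((3:ℝ)/2) = t ^ 6 := by
    rw [show (3:ℝ)/2 = ((6:ℕ):ℝ)/4 by norm_num, hq]
  have e6' : L ^ (-(3:ℝ)/2) = (t ^ 6)⁻¹ := by
    rw [show -(3:ℝ)/2 = -(((6:ℕ):ℝ)/4) by norm_num, Real.rpow_neg hL.le, hq]
  have e2' : L ^ (-(1:ℝ)/2) = (t ^ 2)⁻¹ := by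
    rw [show -(1:ℝ)/2 = -(((2:ℕ):ℝ)/4) by norm_num, Real.rpow_neg hL.le, hq]
  have e1' : L ^ (-(1:ℝ)/4) = t⁻¹ := by
    rw [show -(1:ℝ)/4 = -(((1:ℕ):ℝ)/4) by norm_num, Real.rpow_neg hL.le, hq]
    simp
  have e3' : L ^ (-(3:ℝ)/4) = (t ^ 3)⁻¹ := by
    rw [show -(3:ℝ)/4 = -(((3:ℕ):ℝ)/4) by norm_num, Real.rpow_neg hL.le, hq]
  have e9' : L ^ (-(9:ℝ)/4) = (t ^ 9)⁻¹ := by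
    rw [show -(9:ℝ)/4 = -(((9:ℕ):ℝ)/4) by norm_num, Real.rpow_neg hL.le, hq]
  have eL : L = t ^ 4 := by
    have h4 := hq 4
    rw [show ((4:ℕ):ℝ)/4 = (1:ℝ) by norm_num, Real.rpow_one] at h4
    exact h4
  have eInv : L⁻¹ = (t ^ 4)⁻¹ := by rw [eL]
  have eS : Real.sqrt L = t ^ 2 := by
    rw [Real.sqrt_eq_rpow, show (1:ℝ)/2 = ((2:ℕ):ℝ)/4 by norm_num, hq]
  simp only [Function.comp, FL, ← Complex.exp_add]
  congr 1
  rw [e6, e6', e2', e1', e3', e9', eS, eInv]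
  nth_rewrite 1 [eL]
  have hT : ((t:ℝ):ℂ) ≠ 0 := by exact_mod_cast ht0.ne'
  push_cast
  rw [← sub_eq_zero]
  field_simp [hT]
  ring_nf
end
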